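/- If spaces X_n (n ∈ ℕ) each have a countable Pytkeev network, then the countable product ∏_n X_n (with the product topology) has a countable Pytkeev network. -/

import Mathlib

open Set Filter Topology TopologicalSpace

/-- A set `A` accumulates at `x` if every neighborhood of `x` contains
infinitely many points of `A`. -/
def AccumulatesAt {X : Type*} [TopologicalSpace X] (A : Set X) (x : X) : Prop :=
  ∀ U ∈ 𝓝 x, (U ∩ A).Infinite

/-- `𝒩` is a network: for each point and open neighborhood there is a member of `𝒩`
containing the point and contained in the neighborhood. -/
def IsNetwork {X : Type*} [TopologicalSpace X] (𝒩 : Set (Set X)) : Prop :=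
  ∀ (x : X) (U : Set X), IsOpen U → x ∈ U → ∃ N ∈ 𝒩, x ∈ N ∧ N ⊆ U

/-- `𝒩` is a Pytkeev network. -/
def IsPytkeevNetwork {X : Type*} [TopologicalSpace X] (𝒩 : Set (Set X)) : Prop :=
  IsNetwork 𝒩 ∧ ∀ (x : X) (U : Set X), IsOpen U → x ∈ U →
    ∀ A : Set X, AccumulatesAt A x → ∃ N ∈ 𝒩, N ⊆ U ∧ (N ∩ A).Infinite

/-- `𝒩` is a k-network. -/
def IsKNetwork {X : Type*} [TopologicalSpace X] (𝒩 : Set (Set X)) : Prop :=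
  ∀ (U K : Set X), IsOpen U → IsCompact K → K ⊆ U →
    ∃ F ⊆ 𝒩, F.Finite ∧ K ⊆ ⋃₀ F ∧ ⋃₀ F ⊆ U

/-- If each space `X n` has a countable Pytkeev network, then the countable Tychonoff
product `Π n, X n` has a countable Pytkeev network. -/
theorem pi_countable_pytkeevNetwork {X : ℕ → Type*} [∀ n, TopologicalSpace (X n)]
    (h : ∀ n, ∃ 𝒩 : Set (Set (X n)), 𝒩.Countable ∧ IsPytkeevNetwork 𝒩) :
    ∃ 𝒩 : Set (Set (Π n, X n)), 𝒩.Countable ∧ IsPytkeevNetwork 𝒩 := by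
  classical
  choose 𝒩 hcnt hpy using h
  by_cases hne : ∀ n, Nonempty (X n)
  case neg =>
    push_neg at hne
    obtain ⟨n₀, hn₀⟩ := hne
    refine ⟨∅, countable_empty, ?_, ?_⟩
    · intro x; exact absurd ⟨x n₀⟩ (not_nonempty_iff.mpr hn₀)
    · intro x; exact absurd ⟨x n₀⟩ (not_nonempty_iff.mpr hn₀)
  case pos =>
  have hnonempty : ∀ n, (𝒩 n).Nonempty := by
    intro n
    obtain ⟨x0⟩ := hne n
    obtain ⟨N, hN, -, -⟩ := (hpy n).1 x0 Set.univ isOpen_univ (mem_univ _)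
    exact ⟨N, hN⟩
  choose e he using fun n => (hcnt n).exists_eq_range (hnonempty n)
  -- the product network: all finite boxes, coded by finite sets of pairs (coordinate, index)
  set F : Finset (ℕ × ℕ) → Set (Π n, X n) :=
    fun d => ⋂ p ∈ d, (fun f : Π n, X n => f p.1) ⁻¹' (e p.1 p.2) with hF
  have hmemF : ∀ (d : Finset (ℕ × ℕ)) (f : Π n, X n),
      f ∈ F d ↔ ∀ p ∈ d, f p.1 ∈ e p.1 p.2 := by
    intro d f
    simp [hF]
  refine ⟨Set.range F, countable_range F, ?_, ?_⟩
  · -- Network property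
    intro x V hV hxV
    have hVmem : V ∈ 𝓝 x := hV.mem_nhds hxV
    rw [nhds_pi, Filter.mem_pi'] at hVmem
    obtain ⟨I, t, htm, htV⟩ := hVmem
    have hsel : ∀ j, ∃ k, x j ∈ e j k ∧ e j k ⊆ t j := by
      intro j
      obtain ⟨O, hOt, hOopen, hxO⟩ := mem_nhds_iff.mp (htm j)
      obtain ⟨N, hN, hxN, hNO⟩ := (hpy j).1 (x j) O hOopen hxO
      rw [he j] at hN
      obtain ⟨k, hk⟩ := hN
      exact ⟨k, by rw [hk]; exact hxN, by rw [hk]; exact hNO.trans hOt⟩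
    choose g hg1 hg2 using hsel
    refine ⟨F (I.image fun j => (j, g j)), ⟨_, rfl⟩, ?_, ?_⟩
    · rw [hmemF]
      rintro p hp
      simp only [Finset.mem_image] at hp
      obtain ⟨j, hj, rfl⟩ := hp
      exact hg1 j
    · intro f hf
      apply htV
      intro j hj
      have hj' : j ∈ I := hj
      have : f j ∈ e j (g j) :=
        (hmemF _ f).mp hf (j, g j) (Finset.mem_image_of_mem _ hj')
      exact hg2 j this
  · -- Pytkeev property
    intro x V hV hxV A hA
    have hVmem : V ∈ 𝓝 x := hV.mem_nhds hxV
    rw [nhds_pi, Filter.mem_pi'] at hVmem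
    obtain ⟨I, t, htm, htV⟩ := hVmem
    choose O hOt hOopen hxO using fun j => mem_nhds_iff.mp (htm j)
    rcases I.eq_empty_or_nonempty with hIe | hIne
    · -- empty support: the trivial box works
      refine ⟨F ∅, ⟨∅, rfl⟩, ?_, ?_⟩
      · have hFe : F ∅ = Set.univ := by
          ext f; simp [hF]
        rw [hFe]
        intro f _
        apply htV
        intro j hj
        rw [hIe] at hj
        simp at hj
      · have hFe : F ∅ = Set.univ := by
          ext f; simp [hF]
        rw [hFe, Set.univ_inter]
        have := hA Set.univ Filter.univ_mem
        rwa [Set.univ_inter] at this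
    · by_contra hcon
      push_neg at hcon
      have hbad : ∀ d : Finset (ℕ × ℕ), F d ⊆ V → (A ∩ F d).Finite := by
        intro d hd
        have := hcon (F d) ⟨d, rfl⟩ hd
        exact (Set.inter_comm (F d) A) ▸ this
      -- least capturing index of a point of X j inside O j
      set υ : ∀ j, X j → ℕ := fun j y =>
        if hy : ∃ k, y ∈ e j k ∧ e j k ⊆ O j then Nat.find hy else 0 with hυ
      have hυ_ex : ∀ j (y : X j), y ∈ O j → ∃ k, y ∈ e j k ∧ e j k ⊆ O j := by
        intro j y hy
        obtain ⟨N, hN, hyN, hNO⟩ := (hpy j).1 y (O j) (hOopen j) hy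
        rw [he j] at hN
        obtain ⟨k, hk⟩ := hN
        exact ⟨k, by rw [hk]; exact hyN, by rw [hk]; exact hNO⟩
      have hυ_spec : ∀ j (y : X j), y ∈ O j →
          y ∈ e j (υ j y) ∧ e j (υ j y) ⊆ O j := by
        intro j y hy
        have hex := hυ_ex j y hy
        simp only [hυ, dif_pos hex]
        exact Nat.find_spec hex
      have hυ_min : ∀ j (y : X j) (k : ℕ), y ∈ e j k → e j k ⊆ O j → υ j y ≤ k := by
        intro j y k h1 h2
        have hex : ∃ k, y ∈ e j k ∧ e j k ⊆ O j := ⟨k, h1, h2⟩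
        simp only [hυ, dif_pos hex]
        exact Nat.find_min' hex ⟨h1, h2⟩
      -- a coordinate of maximal capturing index
      have hmax : ∀ a : Π n, X n, ∃ i ∈ I, ∀ j ∈ I, υ j (a j) ≤ υ i (a i) :=
        fun a => I.exists_max_image (fun j => υ j (a j)) hIne
      choose ia hiaI hiamax using hmax
      -- Key finiteness lemma: points of A in the basic open set with all indices ≤ m
      have KL : ∀ m : ℕ,
          {a : Π n, X n | a ∈ A ∧ a ∈ Set.pi ↑I O ∧ ∀ j ∈ I, υ j (a j) ≤ m}.Finite := by
        intro m
        have h𝒟fin : {d : Finset (ℕ × ℕ) | d ⊆ I ×ˢ Finset.range (m + 1) ∧ F d ⊆ V}.Finite := by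
          apply ((I ×ˢ Finset.range (m + 1)).powerset.finite_toSet).subset
          intro d hd
          exact Finset.mem_coe.mpr (Finset.mem_powerset.mpr hd.1)
        have hsub : {a : Π n, X n | a ∈ A ∧ a ∈ Set.pi ↑I O ∧ ∀ j ∈ I, υ j (a j) ≤ m}
            ⊆ ⋃ d ∈ {d : Finset (ℕ × ℕ) | d ⊆ I ×ˢ Finset.range (m + 1) ∧ F d ⊆ V},
                (A ∩ F d) := by
          rintro a ⟨haA, haP, habd⟩
          have haO : ∀ j ∈ I, a j ∈ O j := fun j hj =>
            (Set.mem_pi.mp haP) j (Finset.mem_coe.mpr hj)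
          have hdmem : (I.image fun j => (j, υ j (a j))) ∈
              {d : Finset (ℕ × ℕ) | d ⊆ I ×ˢ Finset.range (m + 1) ∧ F d ⊆ V} := by
            constructor
            · intro p hp
              simp only [Finset.mem_image] at hp
              obtain ⟨j, hj, rfl⟩ := hp
              exact Finset.mem_product.mpr
                ⟨hj, Finset.mem_range.mpr (Nat.lt_succ_of_le (habd j hj))⟩
            · intro f hf
              apply htV
              intro j hj
              have hj' : j ∈ I := hj
              have hfj : f j ∈ e j (υ j (a j)) :=
                (hmemF _ f).mp hf (j, υ j (a j)) (Finset.mem_image_of_mem _ hj')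
              exact (hOt j) ((hυ_spec j (a j) (haO j hj')).2 hfj)
          refine Set.mem_iUnion₂.mpr ⟨_, hdmem, haA, ?_⟩
          rw [hmemF]
          rintro p hp
          simp only [Finset.mem_image] at hp
          obtain ⟨j, hj, rfl⟩ := hp
          exact (hυ_spec j (a j) (haO j hj)).1
        exact (h𝒟fin.biUnion (fun d hd => hbad d hd.2)).subset hsub
      -- projections of the argmax-parts do not accumulate
      set S : ∀ i, Set (X i) := fun i =>
        {y : X i | ∃ a : Π n, X n, a ∈ A ∧ a ∈ Set.pi ↑I O ∧ ia a = i ∧ a i = y} with hS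
      have hSfin : ∀ i ∈ I, ∃ W ∈ 𝓝 (x i), (W ∩ S i).Finite := by
        intro i hi
        by_contra hctr
        push_neg at hctr
        have hacc : AccumulatesAt (S i) (x i) := by
          intro W hW
          exact hctr W hW
        obtain ⟨N, hN𝒩, hNO, hNinf⟩ :=
          (hpy i).2 (x i) (O i) (hOopen i) (hxO i) (S i) hacc
        rw [he i] at hN𝒩
        obtain ⟨k, hk⟩ := hN𝒩
        rw [← hk] at hNO hNinf
        apply hNinf
        have hsubs : e i k ∩ S i ⊆ (fun a : Π n, X n => a i) ''
            {a : Π n, X n | a ∈ A ∧ a ∈ Set.pi ↑I O ∧ ∀ j ∈ I, υ j (a j) ≤ k} := by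
          rintro y ⟨hyN, a, haA, haP, hiaa, rfl⟩
          refine ⟨a, ⟨haA, haP, ?_⟩, rfl⟩
          intro j hj
          have h1 : υ i (a i) ≤ k := hυ_min i (a i) k hyN hNO
          calc υ j (a j) ≤ υ (ia a) (a (ia a)) := hiamax a j hj
            _ = υ i (a i) := by rw [hiaa]
            _ ≤ k := h1
        exact ((KL k).image _).subset hsubs
      choose! W hWnhds hWfin using hSfin
      -- the killing neighborhood
      have hWmem : Set.pi ↑I (fun i => O i ∩ W i) ∈ 𝓝 x := by
        apply set_pi_mem_nhds I.finite_toSet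
        intro i hi
        have hi' : i ∈ I := hi
        exact Filter.inter_mem ((hOopen i).mem_nhds (hxO i)) (hWnhds i hi')
      have hinf := hA _ hWmem
      apply hinf
      have hsub2 : Set.pi ↑I (fun i => O i ∩ W i) ∩ A ⊆
          ⋃ i ∈ (↑I : Set ℕ), ⋃ y ∈ (W i ∩ S i),
            {a : Π n, X n | a ∈ A ∧ a ∈ Set.pi ↑I O ∧ ia a = i ∧ a i = y} := by
        rintro a ⟨haW, haA⟩
        have haP : a ∈ Set.pi ↑I O := Set.mem_pi.mpr fun j hj =>
          ((Set.mem_pi.mp haW) j hj).1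
        have hiaI' : (ia a : ℕ) ∈ (↑I : Set ℕ) := hiaI a
        refine Set.mem_iUnion₂.mpr ⟨ia a, hiaI', ?_⟩
        refine Set.mem_iUnion₂.mpr ⟨a (ia a), ⟨((Set.mem_pi.mp haW) (ia a) hiaI').2, ?_⟩, ?_⟩
        · exact ⟨a, haA, haP, rfl, rfl⟩
        · exact ⟨haA, haP, rfl, rfl⟩
      have hfin2 : (⋃ i ∈ (↑I : Set ℕ), ⋃ y ∈ (W i ∩ S i),
          {a : Π n, X n | a ∈ A ∧ a ∈ Set.pi ↑I O ∧ ia a = i ∧ a i = y}).Finite := by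
        apply Set.Finite.biUnion I.finite_toSet
        intro i hi
        have hi' : i ∈ I := hi
        apply Set.Finite.biUnion (hWfin i hi')
        intro y hy
        apply (KL (υ i y)).subset
        rintro a ⟨haA, haP, hiaa, hay⟩
        refine ⟨haA, haP, ?_⟩
        intro j hj
        calc υ j (a j) ≤ υ (ia a) (a (ia a)) := hiamax a j hj
          _ = υ i (a i) := by rw [hiaa]
          _ = υ i y := by rw [hay]
      exact hfin2.subset hsub2
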